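/- Let H be a k × M binary parity check matrix over GF(2) such that no nonempty set of at most 2s columns of H sums to zero (equivalently, H is the parity check matrix of a linear code with minimum distance at least 2s+1). Let G be a k × n generator matrix of an [n,k,d] binary linear code (i.e., G has full row rank k and every nonzero codeword in its row space has Hamming weight at least d). Define C = {Gᵀh_i : i ∈ [M]}, where h_i are the columns of H. Then: (1) the M vectors Gᵀh_i are pairwise distinct, so |C| = M; (2) for any two distinct nonempty subsets S, S' of C each of size at most s, the XOR-sums ⊕_{x∈S} x and ⊕_{x∈S'} x are distinct, and their Hamming distance is at least d. -/

import Mathlib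

theorem stmt7 (k M n s d : ℕ) (hs : 1 ≤ s)
    (H : Matrix (Fin k) (Fin M) (ZMod 2))
    (hH : ∀ T : Finset (Fin M), T.Nonempty → T.card ≤ 2 * s →
      (∑ j ∈ T, (fun i => H i j)) ≠ (0 : Fin k → ZMod 2))
    (G : Matrix (Fin k) (Fin n) (ZMod 2))
    (hG : Function.Injective fun h : Fin k → ZMod 2 => Matrix.vecMul h G)
    (hd : ∀ h : Fin k → ZMod 2, h ≠ 0 → d ≤ hammingDist (Matrix.vecMul h G) 0) :
    Function.Injective (fun i : Fin M => Matrix.vecMul (fun r => H r i) G) ∧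
    ∀ S S' : Finset (Fin n → ZMod 2),
      S ⊆ Finset.image (fun i : Fin M => Matrix.vecMul (fun r => H r i) G) Finset.univ →
      S' ⊆ Finset.image (fun i : Fin M => Matrix.vecMul (fun r => H r i) G) Finset.univ →
      S.Nonempty → S'.Nonempty → S.card ≤ s → S'.card ≤ s → S ≠ S' →
      (∑ x ∈ S, x) ≠ (∑ x ∈ S', x) ∧ d ≤ hammingDist (∑ x ∈ S, x) (∑ x ∈ S', x) := by
  set f : Fin M → (Fin n → ZMod 2) := fun i => Matrix.vecMul (fun r => H r i) G with hf
  set c : Fin M → (Fin k → ZMod 2) := fun j => fun i => H i j with hc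
  have self0 : ∀ a : Fin n → ZMod 2, a + a = 0 := by
    intro a; funext r; exact CharTwo.add_self_eq_zero _
  have selfk : ∀ a : Fin k → ZMod 2, a + a = 0 := by
    intro a; funext r; exact CharTwo.add_self_eq_zero _
  have key : ∀ h : Fin k → ZMod 2, h ≠ 0 → Matrix.vecMul h G ≠ 0 := by
    intro h hne heq
    exact hne (hG (by simpa [Matrix.zero_vecMul] using heq))
  have hinj : Function.Injective f := by
    intro i j hij
    by_contra hne
    have hcol : c i = c j := hG hij
    have h2 : ({i, j} : Finset (Fin M)).card ≤ 2 * s := by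
      have := Finset.card_insert_le i ({j} : Finset (Fin M))
      simp at this; omega
    refine hH {i, j} ⟨i, by simp⟩ h2 ?_
    rw [Finset.sum_pair hne]
    calc c i + c j = c i + c i := by rw [hcol]
    _ = 0 := selfk _
  refine ⟨hinj, ?_⟩
  intro S S' hS hS' hSne hS'ne hcard hcard' hneq
  classical
  set T := Finset.univ.filter (fun i => f i ∈ S) with hT
  set T' := Finset.univ.filter (fun i => f i ∈ S') with hT'
  have himT : T.image f = S := by
    apply Finset.Subset.antisymm
    · intro x hx
      obtain ⟨i, hi, rfl⟩ := Finset.mem_image.mp hx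
      exact (Finset.mem_filter.mp hi).2
    · intro x hx
      obtain ⟨i, _, rfl⟩ := Finset.mem_image.mp (hS hx)
      exact Finset.mem_image.mpr ⟨i, Finset.mem_filter.mpr ⟨Finset.mem_univ i, hx⟩, rfl⟩
  have himT' : T'.image f = S' := by
    apply Finset.Subset.antisymm
    · intro x hx
      obtain ⟨i, hi, rfl⟩ := Finset.mem_image.mp hx
      exact (Finset.mem_filter.mp hi).2
    · intro x hx
      obtain ⟨i, _, rfl⟩ := Finset.mem_image.mp (hS' hx)
      exact Finset.mem_image.mpr ⟨i, Finset.mem_filter.mpr ⟨Finset.mem_univ i, hx⟩, rfl⟩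
  have hsumT : (∑ x ∈ S, x) = ∑ i ∈ T, f i := by
    rw [← himT, Finset.sum_image (fun a _ b _ h => hinj h)]
  have hsumT' : (∑ x ∈ S', x) = ∑ i ∈ T', f i := by
    rw [← himT', Finset.sum_image (fun a _ b _ h => hinj h)]
  set U := (T \ T') ∪ (T' \ T) with hU
  have hTne : T ≠ T' := fun h => hneq (by rw [← himT, ← himT', h])
  have hUne : U.Nonempty := by
    rw [Finset.nonempty_iff_ne_empty]
    intro h
    rw [hU, Finset.union_eq_empty, Finset.sdiff_eq_empty_iff_subset,
      Finset.sdiff_eq_empty_iff_subset] at h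
    exact hTne (Finset.Subset.antisymm h.1 h.2)
  have hUcard : U.card ≤ 2 * s := by
    have h1 : U.card ≤ (T \ T').card + (T' \ T).card := Finset.card_union_le _ _
    have h2 : (T \ T').card ≤ T.card := Finset.card_le_card (Finset.sdiff_subset)
    have h3 : (T' \ T).card ≤ T'.card := Finset.card_le_card (Finset.sdiff_subset)
    have h4 : T.card = S.card := by
      rw [← himT, Finset.card_image_of_injective _ hinj]
    have h5 : T'.card = S'.card := by
      rw [← himT', Finset.card_image_of_injective _ hinj]
    omega
  have hsum0 : ∑ j ∈ U, c j ≠ 0 := hH U hUne hUcard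
  have hvec : ∀ V : Finset (Fin M), ∑ i ∈ V, f i = Matrix.vecMul (∑ j ∈ V, c j) G := by
    intro V
    rw [show Matrix.vecMul (∑ j ∈ V, c j) G = (Matrix.vecMulLinear G) (∑ j ∈ V, c j) from rfl,
      map_sum]
    rfl
  have hdisj : Disjoint (T \ T') (T' \ T) := disjoint_sdiff_sdiff
  have hcombo : (∑ j ∈ T, c j) + (∑ j ∈ T', c j) = ∑ j ∈ U, c j := by
    rw [hU, Finset.sum_union hdisj,
      ← Finset.sum_inter_add_sum_sdiff T T' c, ← Finset.sum_inter_add_sum_sdiff T' T c,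
      Finset.inter_comm T' T]
    abel_nf
    rw [two_smul, selfk, zero_add]
  have hsumeq : (∑ x ∈ S, x) + (∑ x ∈ S', x) = Matrix.vecMul (∑ j ∈ U, c j) G := by
    rw [hsumT, hsumT', hvec, hvec, ← hcombo,
      show Matrix.vecMul ((∑ j ∈ T, c j) + (∑ j ∈ T', c j)) G
        = (Matrix.vecMulLinear G) ((∑ j ∈ T, c j) + (∑ j ∈ T', c j)) from rfl, map_add]
    rfl
  have hvne : (∑ x ∈ S, x) + (∑ x ∈ S', x) ≠ 0 := by
    rw [hsumeq]; exact key _ hsum0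
  constructor
  · intro h
    rw [h, self0] at hvne
    exact hvne rfl
  · have := hd _ hsum0
    rw [hammingDist_comm, hammingDist_eq_hammingNorm, neg_zero, zero_add] at this
    rw [hammingDist_comm, hammingDist_eq_hammingNorm, neg_add_eq_sub,
      show (∑ x ∈ S, x) - (∑ x ∈ S', x) = (∑ x ∈ S, x) + (∑ x ∈ S', x) from
        funext fun r => CharTwo.sub_eq_add _ _,
      hsumeq]
    exact this
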